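/- (Boundary values preclude extrapolation of linear targets with Layer Normalization.) Let d ≥ 1, let u, w ∈ ℝ^d with Var(u) > 0, and let v : ℝ → ℝ^d satisfy v(x) − (x·u + w) → 0 as x → +∞. Then for any gain ρ ∈ ℝ^d, bias ε ∈ ℝ^d, decoder vector W_dec ∈ ℝ^d, and any linear target f(x) = a·x + b with a ≠ 0, the decoded prediction diverges from the target: |⟨LN(v(x)), W_dec⟩ − (a·x + b)| → +∞ as x → +∞, where ⟨·,·⟩ is the Euclidean inner product on ℝ^d. -/

import Mathlib

open Filter Real

/-- Coordinate mean `mean(v) = (1/d) ∑ᵢ vᵢ` of a vector in ℝ^d. -/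
noncomputable def vecMean {d : ℕ} (v : EuclideanSpace ℝ (Fin d)) : ℝ :=
  (∑ i, v i) / d

/-- Coordinate variance `Var(v) = (1/d) ∑ᵢ (vᵢ − mean(v))²` of a vector in ℝ^d. -/
noncomputable def vecVar {d : ℕ} (v : EuclideanSpace ℝ (Fin d)) : ℝ :=
  (∑ i, (v i - vecMean v) ^ 2) / d

/-- Layer Normalization with gain `ρ` and bias `ε`:
`LN(v) = ((v − mean(v)·𝟙)/√Var(v)) ⊙ ρ + ε` (entrywise). -/
noncomputable def layerNorm {d : ℕ} (ρ ε : EuclideanSpace ℝ (Fin d))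
    (v : EuclideanSpace ℝ (Fin d)) : EuclideanSpace ℝ (Fin d) :=
  WithLp.toLp 2 (fun i => (v i - vecMean v) / Real.sqrt (vecVar v) * ρ i + ε i)

lemma vecMean_smul {d : ℕ} (c : ℝ) (z : EuclideanSpace ℝ (Fin d)) :
    vecMean (c • z) = c * vecMean z := by
  simp [vecMean, ← Finset.mul_sum, mul_div_assoc]

lemma vecVar_smul {d : ℕ} (c : ℝ) (z : EuclideanSpace ℝ (Fin d)) :
    vecVar (c • z) = c ^ 2 * vecVar z := by
  have h : ∀ i, ((c • z) i - c * vecMean z) ^ 2 = c ^ 2 * (z i - vecMean z) ^ 2 := by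
    intro i
    have : (c • z) i = c * z i := rfl
    rw [this]; ring
  simp only [vecVar, vecMean_smul, h, ← Finset.mul_sum, mul_div_assoc]

lemma layerNorm_smul {d : ℕ} (ρ ε : EuclideanSpace ℝ (Fin d))
    (z : EuclideanSpace ℝ (Fin d)) {c : ℝ} (hc : 0 < c) :
    layerNorm ρ ε (c • z) = layerNorm ρ ε z := by
  ext i
  have h1 : (c • z) i = c * z i := rfl
  simp only [layerNorm, PiLp.toLp_apply, h1, vecMean_smul, vecVar_smul]
  rw [Real.sqrt_mul (by positivity), Real.sqrt_sq hc.le, ← mul_sub,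
    mul_div_mul_left _ _ hc.ne']

lemma contMean {d : ℕ} : Continuous (fun z : EuclideanSpace ℝ (Fin d) => vecMean z) := by
  unfold vecMean
  exact (continuous_finset_sum _ fun i _ => (EuclideanSpace.proj i).continuous).div_const _

lemma contVar {d : ℕ} : Continuous (fun z : EuclideanSpace ℝ (Fin d) => vecVar z) := by
  unfold vecVar
  exact (continuous_finset_sum _ fun i _ =>
    (((EuclideanSpace.proj i).continuous.sub contMean).pow 2)).div_const _

theorem stmt_16 (d : ℕ) (hd : 1 ≤ d) (u w : EuclideanSpace ℝ (Fin d))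
    (hu : 0 < vecVar u)
    (v : ℝ → EuclideanSpace ℝ (Fin d))
    (hv : Filter.Tendsto (fun x : ℝ => v x - (x • u + w)) Filter.atTop (nhds 0))
    (ρ ε Wdec : EuclideanSpace ℝ (Fin d)) (a b : ℝ) (ha : a ≠ 0) :
    Filter.Tendsto
      (fun x : ℝ => |(inner ℝ (layerNorm ρ ε (v x)) Wdec : ℝ) - (a * x + b)|)
      Filter.atTop Filter.atTop := by
  -- step 1: x⁻¹ • v x → u
  have h1 : Tendsto (fun x : ℝ => x⁻¹ • v x) atTop (nhds u) := by
    have hA : Tendsto (fun x : ℝ => x⁻¹ • (v x - (x • u + w))) atTop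
        (nhds ((0 : ℝ) • (0 : EuclideanSpace ℝ (Fin d)))) :=
      Tendsto.smul tendsto_inv_atTop_zero hv
    have hB : Tendsto (fun x : ℝ => u + x⁻¹ • w) atTop (nhds (u + (0:ℝ) • w)) :=
      tendsto_const_nhds.add (Tendsto.smul tendsto_inv_atTop_zero tendsto_const_nhds)
    have h := hA.add hB
    simp only [zero_smul, zero_add, add_zero] at h
    refine h.congr' ?_
    filter_upwards [eventually_gt_atTop (0:ℝ)] with x hx
    have hx' : x ≠ 0 := hx.ne'
    simp only [smul_sub, smul_add, smul_smul, inv_mul_cancel₀ hx', one_smul]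
    abel
  -- step 2: continuity of decoded LN at u
  have hne : Real.sqrt (vecVar u) ≠ 0 := by positivity
  have key : ∀ z : EuclideanSpace ℝ (Fin d),
      (inner ℝ (layerNorm ρ ε z) Wdec : ℝ) =
        ∑ i, ((z i - vecMean z) / Real.sqrt (vecVar z) * ρ i + ε i) * Wdec i := by
    intro z
    simp [PiLp.inner_apply, RCLike.inner_apply, layerNorm, mul_comm]
  have hF : ContinuousAt (fun z : EuclideanSpace ℝ (Fin d) =>
      (inner ℝ (layerNorm ρ ε z) Wdec : ℝ)) u := by
    simp only [key]
    refine tendsto_finset_sum _ fun i _ => ContinuousAt.mul ?_ continuousAt_const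
    exact ((((EuclideanSpace.proj i).continuous.continuousAt.sub contMean.continuousAt).div
      ((Real.continuous_sqrt.comp contVar).continuousAt) hne).mul continuousAt_const).add
      continuousAt_const
  have h2 : Tendsto (fun x : ℝ =>
      (inner ℝ (layerNorm ρ ε (x⁻¹ • v x)) Wdec : ℝ)) atTop
      (nhds (inner ℝ (layerNorm ρ ε u) Wdec : ℝ)) := hF.tendsto.comp h1
  have h3 : Tendsto (fun x : ℝ => (inner ℝ (layerNorm ρ ε (v x)) Wdec : ℝ)) atTop
      (nhds (inner ℝ (layerNorm ρ ε u) Wdec : ℝ)) := by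
    refine h2.congr' ?_
    filter_upwards [eventually_gt_atTop (0:ℝ)] with x hx
    have hz : x • (x⁻¹ • v x) = v x := by
      rw [smul_smul, mul_inv_cancel₀ hx.ne', one_smul]
    calc (inner ℝ (layerNorm ρ ε (x⁻¹ • v x)) Wdec : ℝ)
        = (inner ℝ (layerNorm ρ ε (x • (x⁻¹ • v x))) Wdec : ℝ) := by
          rw [layerNorm_smul _ _ _ hx]
      _ = (inner ℝ (layerNorm ρ ε (v x)) Wdec : ℝ) := by rw [hz]
  -- step 3: |a x + b| → ∞
  have habs : Tendsto (fun x : ℝ => |a * x + b|) atTop atTop := by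
    rcases ha.lt_or_gt with h | h
    · have hpos : (0:ℝ) < -a := neg_pos.2 h
      have h' : Tendsto (fun x : ℝ => a * x) atTop atBot := by
        have := tendsto_neg_atTop_atBot.comp
          (tendsto_id.const_mul_atTop hpos : Tendsto (fun x : ℝ => -a * x) atTop atTop)
        exact this.congr (fun x => by simp)
      exact tendsto_abs_atBot_atTop.comp (tendsto_atBot_add_const_right _ b h')
    · exact tendsto_abs_atTop_atTop.comp
        (tendsto_atTop_add_const_right _ b (tendsto_id.const_mul_atTop h))
  -- conclude
  have hsub : Tendsto (fun x : ℝ =>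
      |a * x + b| - |(inner ℝ (layerNorm ρ ε (v x)) Wdec : ℝ)|) atTop atTop := by
    have := habs.atTop_add h3.abs.neg
    exact this.congr (fun x => by ring)
  refine tendsto_atTop_mono (fun x => ?_) hsub
  have h4 := abs_sub_abs_le_abs_sub (a * x + b) ((inner ℝ (layerNorm ρ ε (v x)) Wdec : ℝ))
  rw [abs_sub_comm] at h4
  linarith
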